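/- Let X and Y be Boolean spaces, let M be a dense subset of X carrying a monoid structure with left-action components λ^X_m : X → X continuous (λ^X_m restricted to M is left multiplication by m), and let N be a dense subset of Y with a monoid structure and continuous left-action components λ^Y_n : Y → Y. Let S be a finite subset of M × N, m₁ ∈ M and n₁ ∈ N. Then the map from V(X×Y) × X × Y to itself sending (Z, x, y) to (m₁Z ∪ Sy, λ^X_{m₁}(x), λ^Y_{n₁}(y)) is well defined (its first coordinate is a closed subset of X × Y) and continuous, where m₁Z := {(λ^X_{m₁}(x'), y') : (x',y') ∈ Z} and Sy := {(m, λ^Y_n(y)) : (m,n) ∈ S}, each m being regarded as a point of X. -/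
import Mathlib


/-- The points of the Vietoris space of `X`: the closed subsets of `X`. -/
structure VClosed (X : Type*) [TopologicalSpace X] where
  carrier : Set X
  isClosed : IsClosed carrier

/-- The Vietoris topology on the closed subsets of `X`, generated by the subbasic sets
`◊U = {K : K ∩ U ≠ ∅}` and `□U = {K : K ⊆ U}` for `U` open. -/
instance VClosed.instTopologicalSpace (X : Type*) [TopologicalSpace X] :
    TopologicalSpace (VClosed X) :=
  TopologicalSpace.generateFrom
    ({s | ∃ U : Set X, IsOpen U ∧ s = {K : VClosed X | (K.carrier ∩ U).Nonempty}} ∪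
     {s | ∃ U : Set X, IsOpen U ∧ s = {K : VClosed X | K.carrier ⊆ U}})

/-- The subbasic diamond sets are open. -/
lemma VClosed.isOpen_diamond {X : Type*} [TopologicalSpace X] {U : Set X} (hU : IsOpen U) :
    IsOpen {K : VClosed X | (K.carrier ∩ U).Nonempty} :=
  TopologicalSpace.isOpen_generateFrom_of_mem (Or.inl ⟨U, hU, rfl⟩)

/-- The subbasic box sets are open. -/
lemma VClosed.isOpen_box {X : Type*} [TopologicalSpace X] {U : Set X} (hU : IsOpen U) :
    IsOpen {K : VClosed X | K.carrier ⊆ U} :=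
  TopologicalSpace.isOpen_generateFrom_of_mem (Or.inr ⟨U, hU, rfl⟩)

/-- Continuity of the left-action components of `◊(M,N)` on the binary Schützenberger
product of Boolean spaces `◊(X,Y) = V(X×Y) × X × Y`: for dense internal monoids `M ⊆ X`,
`N ⊆ Y` with continuous left-action components extending multiplication, a finite
`S ⊆ M × N`, `m₁ ∈ M` and `n₁ ∈ N`, the map
`(Z,x,y) ↦ (m₁Z ∪ Sy, λ^X_{m₁}(x), λ^Y_{n₁}(y))` has closed first coordinate and is
continuous. -/
theorem stmt6 {X Y : Type*} [TopologicalSpace X] [CompactSpace X] [T2Space X]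
    [TotallyDisconnectedSpace X] [TopologicalSpace Y] [CompactSpace Y] [T2Space Y]
    [TotallyDisconnectedSpace Y]
    (M : Set X) (hM : Dense M) [Monoid M]
    (lamX : M → X → X)
    (hlamX_cont : ∀ m : M, Continuous (lamX m))
    (hlamX : ∀ m m' : M, lamX m (m' : X) = ((m * m' : M) : X))
    (N : Set Y) (hN : Dense N) [Monoid N]
    (lamY : N → Y → Y)
    (hlamY_cont : ∀ n : N, Continuous (lamY n))
    (hlamY : ∀ n n' : N, lamY n (n' : Y) = ((n * n' : N) : Y))
    (S : Finset (M × N)) (m₁ : M) (n₁ : N) :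
    ∃ hcl : ∀ (Z : Set (X × Y)), IsClosed Z → ∀ y : Y,
        IsClosed ((fun q : X × Y => (lamX m₁ q.1, q.2)) '' Z ∪
          (fun sn : M × N => ((sn.1 : X), lamY sn.2 y)) '' (S : Set (M × N))),
      Continuous (fun p : VClosed (X × Y) × X × Y =>
        ((⟨(fun q : X × Y => (lamX m₁ q.1, q.2)) '' p.1.carrier ∪
            (fun sn : M × N => ((sn.1 : X), lamY sn.2 p.2.2)) '' (S : Set (M × N)),
            hcl p.1.carrier p.1.isClosed p.2.2⟩ : VClosed (X × Y)),
          lamX m₁ p.2.1, lamY n₁ p.2.2)) := by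
  have hg : Continuous (fun q : X × Y => (lamX m₁ q.1, q.2)) :=
    ((hlamX_cont m₁).comp continuous_fst).prodMk continuous_snd
  have hcl : ∀ (Z : Set (X × Y)), IsClosed Z → ∀ y : Y,
      IsClosed ((fun q : X × Y => (lamX m₁ q.1, q.2)) '' Z ∪
        (fun sn : M × N => ((sn.1 : X), lamY sn.2 y)) '' (S : Set (M × N))) := by
    intro Z hZ y
    exact ((hZ.isCompact.image hg).isClosed).union
      ((S.finite_toSet.image _).isClosed)
  refine ⟨hcl, ?_⟩
  refine continuous_prodMk.2 ⟨?_, continuous_prodMk.2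
    ⟨(hlamX_cont m₁).comp (continuous_fst.comp continuous_snd),
     (hlamY_cont n₁).comp (continuous_snd.comp continuous_snd)⟩⟩
  -- continuity of the first coordinate into the Vietoris space
  rw [continuous_generateFrom_iff]
  rintro s (⟨U, hU, rfl⟩ | ⟨U, hU, rfl⟩)
  · -- diamond case
    have : (fun p : VClosed (X × Y) × X × Y =>
        ((⟨_, hcl p.1.carrier p.1.isClosed p.2.2⟩ : VClosed (X × Y)))) ⁻¹'
          {K : VClosed (X × Y) | (K.carrier ∩ U).Nonempty} =
        {p : VClosed (X × Y) × X × Y |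
          (p.1.carrier ∩ ((fun q : X × Y => (lamX m₁ q.1, q.2)) ⁻¹' U)).Nonempty} ∪
        ⋃ sn ∈ S, {p : VClosed (X × Y) × X × Y | ((sn.1 : X), lamY sn.2 p.2.2) ∈ U} := by
      ext p
      constructor
      · rintro ⟨q, hq | hq, hqU⟩
        · obtain ⟨z, hz, rfl⟩ := hq
          exact Or.inl ⟨z, hz, hqU⟩
        · obtain ⟨sn, hsn, rfl⟩ := hq
          exact Or.inr (Set.mem_biUnion hsn hqU)
      · rintro (⟨z, hz, hzU⟩ | h)
        · exact ⟨_, Or.inl ⟨z, hz, rfl⟩, hzU⟩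
        · obtain ⟨sn, hsn, h⟩ := Set.mem_iUnion₂.1 h
          exact ⟨_, Or.inr ⟨sn, hsn, rfl⟩, h⟩
    rw [this]
    refine IsOpen.union ?_ ?_
    · exact (VClosed.isOpen_diamond (hU.preimage hg)).preimage continuous_fst
    · exact isOpen_biUnion fun sn _ => hU.preimage
        (((continuous_const).prodMk ((hlamY_cont sn.2).comp
          (continuous_snd.comp continuous_snd))))
  · -- box case
    have : (fun p : VClosed (X × Y) × X × Y =>
        ((⟨_, hcl p.1.carrier p.1.isClosed p.2.2⟩ : VClosed (X × Y)))) ⁻¹'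
          {K : VClosed (X × Y) | K.carrier ⊆ U} =
        {p : VClosed (X × Y) × X × Y |
          p.1.carrier ⊆ ((fun q : X × Y => (lamX m₁ q.1, q.2)) ⁻¹' U)} ∩
        ⋂ sn ∈ S, {p : VClosed (X × Y) × X × Y | ((sn.1 : X), lamY sn.2 p.2.2) ∈ U} := by
      ext p
      constructor
      · intro h
        refine ⟨fun z hz => h (Or.inl ⟨z, hz, rfl⟩), ?_⟩
        exact Set.mem_iInter₂.2 fun sn hsn => h (Or.inr ⟨sn, hsn, rfl⟩)
      · rintro ⟨h1, h2⟩ q (⟨z, hz, rfl⟩ | ⟨sn, hsn, rfl⟩)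
        · exact h1 hz
        · exact Set.mem_iInter₂.1 h2 sn hsn
    rw [this]
    refine IsOpen.inter ?_ ?_
    · exact (VClosed.isOpen_box (hU.preimage hg)).preimage continuous_fst
    · exact (S.finite_toSet).isOpen_biInter fun sn _ => hU.preimage
        (((continuous_const).prodMk ((hlamY_cont sn.2).comp
          (continuous_snd.comp continuous_snd))))
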